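/- Let π* and π be joint policies in a finite Markov game with bounded rewards and γ ∈ [0,1). Let λ*_π(τ_i) be the probability of generating the length-t agent-i trajectory τ_i = {s^{(j)}, a_i^{(j)}}_{j=0}^t when agent i uses π_i and the other agents use π*_{-i}, starting from s^{(0)} ∼ η. Then lim_{t→∞} Σ_{i=1}^N Σ_{τ_i} λ*_π(τ_i) (Q_i^{(t)}(τ_i; π*, r) − v̂_i(s^{(0)}; π*, r)) = Σ_{i=1}^N E_{π_i, π*_{-i}}[Σ_t γ^t r_i] − Σ_{i=1}^N E_{π*}[Σ_t γ^t r_i]. -/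
import Mathlib


open scoped BigOperators

/-- A finite Markov game with `N` agents: finite state space `S`, finite action
spaces `A i`, transition kernel `P`, bounded rewards `r i`, discount `γ ∈ [0,1)`. -/
structure MarkovGame (N : ℕ) (S : Type) (A : Fin N → Type) [Fintype S]
    [∀ i, Fintype (A i)] where
  P : S → ((i : Fin N) → A i) → S → ℝ
  P_nonneg : ∀ s a s', 0 ≤ P s a s'
  P_sum : ∀ s a, ∑ s', P s a s' = 1
  r : Fin N → S → ((i : Fin N) → A i) → ℝ
  γ : ℝ
  γ_nonneg : 0 ≤ γ
  γ_lt_one : γ < 1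

variable {N : ℕ} {S : Type} {A : Fin N → Type} [Fintype S] [DecidableEq S]
  [∀ i, Fintype (A i)] [∀ i, DecidableEq (A i)]

/-- A (stationary, Markovian) joint policy: for each agent, a map from states to
(scores of) distributions over that agent's actions. -/
abbrev JPol (N : ℕ) (S : Type) (A : Fin N → Type) := (i : Fin N) → S → A i → ℝ

/-- `p` is a probability distribution on a finite type. -/
def IsDist {α : Type} [Fintype α] (p : α → ℝ) : Prop :=
  (∀ x, 0 ≤ p x) ∧ ∑ x, p x = 1

/-- Each agent's policy gives a probability distribution over actions in every state. -/
def IsJPol (π : JPol N S A) : Prop := ∀ i s, IsDist (π i s)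

/-- Probability of the joint action `a` in state `s` (agents act independently). -/
def jp (π : JPol N S A) (s : S) (a : (i : Fin N) → A i) : ℝ := ∏ i, π i s (a i)

/-- Extend an assignment of actions to all agents except `i` into a joint action
where agent `i` plays `ai`. -/
def extendA (i : Fin N) (ai : A i) (b : (j : {j : Fin N // j ≠ i}) → A j.1) :
    (j : Fin N) → A j :=
  fun j => if h : j = i then (by subst h; exact ai) else b ⟨j, h⟩

/-- Expectation over the actions of all agents other than `i` (drawn from `π_{-i}(·|s)`),
with agent `i` playing the fixed action `ai`. -/
def Eminus (π : JPol N S A) (i : Fin N) (s : S) (ai : A i)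
    (f : ((j : Fin N) → A j) → ℝ) : ℝ :=
  ∑ b : ((j : {j : Fin N // j ≠ i}) → A j.1),
    (∏ j, π j.1 s (b j)) * f (extendA i ai b)

/-- The Bellman operator for agent `i` under joint policy `π`:
`(T_i v)(s) = E_{a∼π(·|s)}[r_i(s,a) + γ Σ_{s'} P(s'|s,a) v(s')]`. -/
def bell (G : MarkovGame N S A) (π : JPol N S A) (i : Fin N) (v : S → ℝ) : S → ℝ :=
  fun s => ∑ a, jp π s a * (G.r i s a + G.γ * ∑ s', G.P s a s' * v s')

/-- `q̂_i(s, a_i) = E_{π_{-i}}[r_i(s,a) + γ Σ_{s'} P(s'|s,a) v(s')]`. -/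
def qhat (G : MarkovGame N S A) (π : JPol N S A) (i : Fin N) (v : S → ℝ)
    (s : S) (ai : A i) : ℝ :=
  Eminus π i s ai (fun a => G.r i s a + G.γ * ∑ s', G.P s a s' * v s')

/-- One-step evolution of a state distribution under joint policy `π`. -/
def stepDist (G : MarkovGame N S A) (π : JPol N S A) (d : S → ℝ) : S → ℝ :=
  fun s' => ∑ s, d s * ∑ a, jp π s a * G.P s a s'

/-- Expected total discounted reward `E_π[Σ_t γ^t ρ(s_t, a_t)]` with initial
state distribution `η` and reward function `ρ`. -/
noncomputable def expRet (G : MarkovGame N S A) (π : JPol N S A)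
    (ρ : S → ((i : Fin N) → A i) → ℝ) (η : S → ℝ) : ℝ :=
  ∑' t : ℕ, G.γ ^ t * ∑ s, ((stepDist G π)^[t] η) s * ∑ a, jp π s a * ρ s a

/-- Value of joint policy `π` for agent `i` started from state `s0`. -/
noncomputable def val (G : MarkovGame N S A) (π : JPol N S A) (i : Fin N) (s0 : S) : ℝ :=
  expRet G π (G.r i) (fun s => if s = s0 then 1 else 0)

/-- `π` is a Nash equilibrium: no agent can increase its value (from any state) by
unilaterally switching to another stationary policy. -/
noncomputable def IsNash (G : MarkovGame N S A) (π : JPol N S A) : Prop :=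
  IsJPol π ∧ ∀ (i : Fin N) (p : S → A i → ℝ), (∀ s, IsDist (p s)) →
    ∀ s, val G (Function.update π i p) i s ≤ val G π i s

/-- Marginal transition probability for agent `i`: probability of moving to `s'`
when agent `i` plays `ai` in `s` and the others play `π_{-i}(·|s)`. -/
def stepProb (G : MarkovGame N S A) (π : JPol N S A) (i : Fin N)
    (s : S) (ai : A i) (s' : S) : ℝ :=
  Eminus π i s ai (fun a => G.P s a s')

/-- The `t`-step unrolled Q-value `Q_i^{(t)}({s^{(j)}, a_i^{(j)}}_{j=0}^t; π, r)`:
expected discounted return for agent `i` when the states are conditioned to be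
`s^{(j)}` and agent `i` plays the prescribed actions for the first `t` steps
(following `π_i` thereafter), while other agents follow `π_{-i}`. -/
def Qt (G : MarkovGame N S A) (π : JPol N S A) (i : Fin N) (v : S → ℝ) {t : ℕ}
    (τ : Fin (t + 1) → S × A i) : ℝ :=
  (∑ j : Fin t, G.γ ^ (j : ℕ) *
      Eminus π i (τ j.castSucc).1 (τ j.castSucc).2 (fun a => G.r i (τ j.castSucc).1 a))
    + G.γ ^ t * qhat G π i v (τ (Fin.last t)).1 (τ (Fin.last t)).2

/-- `λ*_π(τ_i)`: probability of generating the agent-`i` trajectory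
`τ = {s^{(j)}, a_i^{(j)}}_{j=0}^t` with `s^{(0)} ∼ η`, agent `i` using `π_i`, and
the other agents using `π*_{-i}` (transitions marginalized over the others' actions). -/
def lam (G : MarkovGame N S A) (π πstar : JPol N S A) (i : Fin N) (η : S → ℝ)
    {t : ℕ} (τ : Fin (t + 1) → S × A i) : ℝ :=
  η (τ 0).1 * π i (τ 0).1 (τ 0).2 *
    ∏ j : Fin t, (π i (τ j.succ).1 (τ j.succ).2 *
      stepProb G πstar i (τ j.castSucc).1 (τ j.castSucc).2 (τ j.succ).1)


section helpers
set_option linter.unusedSectionVars false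

variable {N : ℕ} {S : Type} {A : Fin N → Type} [Fintype S] [DecidableEq S]
  [∀ i, Fintype (A i)] [∀ i, DecidableEq (A i)]

lemma prod_split (i : Fin N) (f : (j : Fin N) → A j → ℝ) (a : (j : Fin N) → A j) :
    ∏ j, f j (a j) = f i (a i) * ∏ j : {j : Fin N // j ≠ i}, f j.1 (a j.1) := by
  rw [Fintype.prod_eq_mul_prod_compl i]
  congr 1
  rw [Finset.prod_subtype (p := fun j => j ≠ i) ({i}ᶜ : Finset (Fin N))
    (fun x => by simp) (fun j => f j (a j))]

lemma extendA_self (i : Fin N) (a : (j : Fin N) → A j) :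
    extendA i (a i) (fun j => a j.1) = a := by
  funext j
  unfold extendA
  by_cases h : j = i
  · subst h; simp
  · simp [h]

/-- Factorization of a sum over joint actions. -/
lemma sum_factorize (πstar : JPol N S A) (i : Fin N) (p : S → A i → ℝ) (s : S)
    (f : ((j : Fin N) → A j) → ℝ) :
    ∑ a, jp (Function.update πstar i p) s a * f a
      = ∑ ai, p s ai * Eminus πstar i s ai f := by
  have key : ∀ a : (j : Fin N) → A j,
      jp (Function.update πstar i p) s a * f a
        = p s (a i) * ((∏ j : {j : Fin N // j ≠ i}, πstar j.1 s (a j.1)) *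
            f (extendA i (a i) (fun j => a j.1))) := by
    intro a
    rw [extendA_self, jp, prod_split i (fun j aj => (Function.update πstar i p) j s aj) a]
    rw [Function.update_self]
    have : ∀ j : {j : Fin N // j ≠ i},
        (Function.update πstar i p) j.1 s (a j.1) = πstar j.1 s (a j.1) := fun j => by
      rw [Function.update_of_ne j.2]
    rw [Finset.prod_congr rfl fun j _ => this j]
    ring
  rw [Finset.sum_congr rfl fun a _ => key a]
  rw [Fintype.sum_equiv (Equiv.piSplitAt i A) _
    (fun x : A i × ((j : {j : Fin N // j ≠ i}) → A j.1) =>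
      p s x.1 * ((∏ j, πstar j.1 s (x.2 j)) * f (extendA i x.1 x.2)))
    (fun a => by simp [Equiv.piSplitAt])]
  rw [Fintype.sum_prod_type]
  simp only [Eminus, Finset.mul_sum]

lemma sum_others (πstar : JPol N S A) (h : IsJPol πstar) (i : Fin N) (s : S) :
    ∑ b : ((j : {j : Fin N // j ≠ i}) → A j.1), ∏ j, πstar j.1 s (b j) = 1 := by
  rw [← Fintype.prod_sum]
  exact Finset.prod_eq_one fun j _ => (h j.1 s).2

lemma Eminus_nonneg (πstar : JPol N S A) (h : IsJPol πstar) (i : Fin N) (s : S) (ai : A i)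
    (f : ((j : Fin N) → A j) → ℝ) (hf : ∀ a, 0 ≤ f a) : 0 ≤ Eminus πstar i s ai f :=
  Finset.sum_nonneg fun b _ => mul_nonneg
    (Finset.prod_nonneg fun j _ => (h j.1 s).1 _) (hf _)

lemma stepProb_nonneg (G : MarkovGame N S A) (πstar : JPol N S A) (h : IsJPol πstar)
    (i : Fin N) (s : S) (ai : A i) (s' : S) : 0 ≤ stepProb G πstar i s ai s' :=
  Eminus_nonneg πstar h i s ai _ fun a => G.P_nonneg s a s'

lemma stepProb_sum (G : MarkovGame N S A) (πstar : JPol N S A) (h : IsJPol πstar)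
    (i : Fin N) (s : S) (ai : A i) : ∑ s', stepProb G πstar i s ai s' = 1 := by
  unfold stepProb Eminus
  rw [Finset.sum_comm]
  rw [← sum_others πstar h i s]
  refine Finset.sum_congr rfl fun b _ => ?_
  rw [← Finset.mul_sum, G.P_sum, mul_one]

lemma sum_w_one (G : MarkovGame N S A) (π πstar : JPol N S A) (hπ : IsJPol π)
    (hstar : IsJPol πstar) (i : Fin N) (y : S × A i) :
    ∑ x : S × A i, π i x.1 x.2 * stepProb G πstar i y.1 y.2 x.1 = 1 := by
  rw [Fintype.sum_prod_type]
  have : ∀ s : S, ∑ a : A i, π i s a * stepProb G πstar i y.1 y.2 s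
      = stepProb G πstar i y.1 y.2 s := by
    intro s; rw [← Finset.sum_mul, (hπ i s).2, one_mul]
  rw [Finset.sum_congr rfl fun s _ => this s]
  exact stepProb_sum G πstar hstar i y.1 y.2

lemma jp_nonneg (q : JPol N S A) (hq : IsJPol q) (s : S) (a : (j : Fin N) → A j) :
    0 ≤ jp q s a :=
  Finset.prod_nonneg fun j _ => (hq j s).1 _

lemma sum_jp_one (q : JPol N S A) (hq : IsJPol q) (s : S) : ∑ a, jp q s a = 1 := by
  unfold jp
  rw [← Fintype.prod_sum]
  exact Finset.prod_eq_one fun j _ => (hq j s).2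

lemma isJPol_update (π πstar : JPol N S A) (hπ : IsJPol π) (hstar : IsJPol πstar)
    (i : Fin N) : IsJPol (Function.update πstar i (π i)) := by
  intro j s
  by_cases h : j = i
  · subst h; rw [Function.update_self]; exact hπ j s
  · rw [Function.update_of_ne h]; exact hstar j s

lemma stepDist_isDist (G : MarkovGame N S A) (q : JPol N S A) (hq : IsJPol q)
    (d : S → ℝ) (hd : IsDist d) : IsDist (stepDist G q d) := by
  constructor
  · intro s'
    exact Finset.sum_nonneg fun s _ => mul_nonneg (hd.1 s) <|
      Finset.sum_nonneg fun a _ => mul_nonneg (jp_nonneg q hq s a) (G.P_nonneg s a s')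
  · unfold stepDist
    rw [Finset.sum_comm]
    rw [← hd.2]
    refine Finset.sum_congr rfl fun s _ => ?_
    rw [← Finset.mul_sum, Finset.sum_comm]
    have : ∑ a, ∑ s', jp q s a * G.P s a s' = 1 := by
      rw [← sum_jp_one q hq s]
      exact Finset.sum_congr rfl fun a _ => by rw [← Finset.mul_sum, G.P_sum, mul_one]
    rw [this, mul_one]

lemma iter_isDist (G : MarkovGame N S A) (q : JPol N S A) (hq : IsJPol q)
    (η : S → ℝ) (hη : IsDist η) (t : ℕ) : IsDist ((stepDist G q)^[t] η) := by
  induction t with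
  | zero => exact hη
  | succ t ih => rw [Function.iterate_succ_apply']; exact stepDist_isDist G q hq _ ih

lemma dist_weight_abs_le {α : Type} [Fintype α] (d f : α → ℝ) (hd : IsDist d) :
    |∑ x, d x * f x| ≤ ∑ x, |f x| := by
  refine (Finset.abs_sum_le_sum_abs _ _).trans ?_
  refine Finset.sum_le_sum fun x _ => ?_
  rw [abs_mul, abs_of_nonneg (hd.1 x)]
  have hdx : d x ≤ 1 := by
    rw [← hd.2]
    exact Finset.single_le_sum (fun y _ => hd.1 y) (Finset.mem_univ x)
  nlinarith [abs_nonneg (f x)]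

/-- The marginal distribution over (state, action of agent i) at time `t`. -/
def mu (G : MarkovGame N S A) (π πstar : JPol N S A) (i : Fin N) (η : S → ℝ) :
    ℕ → S × A i → ℝ
  | 0 => fun x => η x.1 * π i x.1 x.2
  | (t+1) => fun x =>
      (∑ y : S × A i, mu G π πstar i η t y * stepProb G πstar i y.1 y.2 x.1) * π i x.1 x.2

lemma mu_eq (G : MarkovGame N S A) (π πstar : JPol N S A) (i : Fin N) (η : S → ℝ)
    (t : ℕ) (x : S × A i) :
    mu G π πstar i η t x
      = ((stepDist G (Function.update πstar i (π i)))^[t] η) x.1 * π i x.1 x.2 := by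
  induction t generalizing x with
  | zero => rfl
  | succ t ih =>
    obtain ⟨s', a'⟩ := x
    show (∑ y : S × A i, mu G π πstar i η t y * stepProb G πstar i y.1 y.2 s') * π i s' a' = _
    rw [Function.iterate_succ_apply']
    congr 1
    rw [Fintype.sum_prod_type]
    have h2 : ∀ s : S, ∑ ai : A i, mu G π πstar i η t (s, ai) * stepProb G πstar i s ai s'
        = ((stepDist G (Function.update πstar i (π i)))^[t] η) s *
          ∑ a, jp (Function.update πstar i (π i)) s a * G.P s a s' := by
      intro s
      rw [sum_factorize πstar i (π i) s (fun a => G.P s a s'), Finset.mul_sum]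
      refine Finset.sum_congr rfl fun ai _ => ?_
      rw [ih (s, ai)]
      show _ * π i s ai * stepProb G πstar i s ai s' = _
      rw [stepProb]
      ring
    rw [Finset.sum_congr rfl fun s _ => h2 s]
    rfl

lemma lam_snoc (G : MarkovGame N S A) (π πstar : JPol N S A) (i : Fin N) (η : S → ℝ)
    (t : ℕ) (τ : Fin (t+1) → S × A i) (x : S × A i) :
    lam G π πstar i η (Fin.snoc τ x : Fin (t+2) → S × A i)
      = lam G π πstar i η τ *
        (π i x.1 x.2 * stepProb G πstar i (τ (Fin.last t)).1 (τ (Fin.last t)).2 x.1) := by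
  have h0 : (Fin.snoc τ x : Fin (t+2) → S × A i) 0 = τ 0 := by
    rw [← Fin.castSucc_zero, Fin.snoc_castSucc]
  unfold lam
  rw [h0, Fin.prod_univ_castSucc (n := t)]
  simp only [Fin.succ_castSucc, Fin.snoc_castSucc, Fin.succ_last, Fin.snoc_last]
  ring

lemma sum_snoc {X : Type} [Fintype X] (t : ℕ) (F : (Fin (t+2) → X) → ℝ) :
    ∑ τ' : Fin (t+2) → X, F τ'
      = ∑ τ : Fin (t+1) → X, ∑ x : X, F (Fin.snoc τ x) := by
  rw [← Equiv.sum_comp (Fin.snocEquiv (fun _ => X)) F, Fintype.sum_prod_type,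
    Finset.sum_comm]
  rfl

lemma sum_fin_one {X : Type} [Fintype X] (F : (Fin 1 → X) → ℝ) :
    ∑ τ : Fin 1 → X, F τ = ∑ x : X, F (fun _ => x) := by
  rw [← Equiv.sum_comp (Equiv.funUnique (Fin 1) X).symm F]
  rfl

lemma mu_succ_sum (G : MarkovGame N S A) (π πstar : JPol N S A) (i : Fin N) (η : S → ℝ)
    (t : ℕ) (g : S × A i → ℝ) :
    ∑ x : S × A i, mu G π πstar i η (t+1) x * g x
      = ∑ y : S × A i, mu G π πstar i η t y *
          ∑ x : S × A i, (π i x.1 x.2 * stepProb G πstar i y.1 y.2 x.1) * g x := by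
  have h : ∀ x : S × A i, mu G π πstar i η (t+1) x * g x
      = ∑ y, mu G π πstar i η t y * ((π i x.1 x.2 * stepProb G πstar i y.1 y.2 x.1) * g x) := by
    intro x
    show (∑ y, mu G π πstar i η t y * stepProb G πstar i y.1 y.2 x.1) * π i x.1 x.2 * g x = _
    rw [Finset.sum_mul, Finset.sum_mul]
    exact Finset.sum_congr rfl fun y _ => by ring
  rw [Finset.sum_congr rfl fun x _ => h x, Finset.sum_comm]
  exact Finset.sum_congr rfl fun y _ => by rw [Finset.mul_sum]

/-- Marginalization at the last coordinate. -/
lemma lam_last (G : MarkovGame N S A) (π πstar : JPol N S A) (hπ : IsJPol π)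
    (hstar : IsJPol πstar) (i : Fin N) (η : S → ℝ) (t : ℕ) (g : S × A i → ℝ) :
    ∑ τ : Fin (t+1) → S × A i, lam G π πstar i η τ * g (τ (Fin.last t))
      = ∑ x : S × A i, mu G π πstar i η t x * g x := by
  induction t generalizing g with
  | zero =>
    rw [sum_fin_one]
    refine Finset.sum_congr rfl fun x _ => ?_
    show lam G π πstar i η (fun _ => x) * g x = _
    unfold lam mu
    simp
  | succ t ih =>
    rw [sum_snoc, mu_succ_sum]
    rw [← ih (fun y => ∑ x : S × A i, (π i x.1 x.2 * stepProb G πstar i y.1 y.2 x.1) * g x)]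
    refine Finset.sum_congr rfl fun τ _ => ?_
    rw [Finset.mul_sum]
    refine Finset.sum_congr rfl fun x _ => ?_
    rw [lam_snoc, Fin.snoc_last]
    ring

/-- Marginalization at the first coordinate. -/
lemma lam_first (G : MarkovGame N S A) (π πstar : JPol N S A) (hπ : IsJPol π)
    (hstar : IsJPol πstar) (i : Fin N) (η : S → ℝ) (t : ℕ) (g : S × A i → ℝ) :
    ∑ τ : Fin (t+1) → S × A i, lam G π πstar i η τ * g (τ 0)
      = ∑ x : S × A i, mu G π πstar i η 0 x * g x := by
  induction t with
  | zero =>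
    rw [sum_fin_one]
    refine Finset.sum_congr rfl fun x _ => ?_
    show lam G π πstar i η (fun _ => x) * g x = _
    unfold lam mu
    simp
  | succ t ih =>
    rw [sum_snoc, ← ih]
    refine Finset.sum_congr rfl fun τ _ => ?_
    have h0 : ∀ x : S × A i, (Fin.snoc τ x : Fin (t+2) → S × A i) 0 = τ 0 := fun x => by
      rw [← Fin.castSucc_zero, Fin.snoc_castSucc]
    calc ∑ x : S × A i, lam G π πstar i η (Fin.snoc τ x) * g ((Fin.snoc τ x : Fin (t+2) → S × A i) 0)
        = ∑ x : S × A i, lam G π πstar i η τ * g (τ 0) *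
            (π i x.1 x.2 * stepProb G πstar i (τ (Fin.last t)).1 (τ (Fin.last t)).2 x.1) := by
          refine Finset.sum_congr rfl fun x _ => ?_
          rw [lam_snoc, h0 x]
          ring
      _ = lam G π πstar i η τ * g (τ 0) := by
          rw [← Finset.mul_sum, sum_w_one G π πstar hπ hstar i (τ (Fin.last t)), mul_one]

lemma Qt_snoc (G : MarkovGame N S A) (πstar : JPol N S A) (i : Fin N) (v : S → ℝ)
    (t : ℕ) (τ : Fin (t+1) → S × A i) (x : S × A i) :
    Qt G πstar i v (Fin.snoc τ x : Fin (t+2) → S × A i)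
      = Qt G πstar i v τ
        + G.γ ^ t * (Eminus πstar i (τ (Fin.last t)).1 (τ (Fin.last t)).2
            (fun a => G.r i (τ (Fin.last t)).1 a)
          - qhat G πstar i v (τ (Fin.last t)).1 (τ (Fin.last t)).2)
        + G.γ ^ (t+1) * qhat G πstar i v x.1 x.2 := by
  unfold Qt
  rw [Fin.sum_univ_castSucc (n := t)]
  simp only [Fin.snoc_castSucc, Fin.succ_last, Fin.snoc_last,
    Fin.coe_castSucc, Fin.val_last]
  ring

lemma sum_lam_Qt (G : MarkovGame N S A) (π πstar : JPol N S A) (hπ : IsJPol π)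
    (hstar : IsJPol πstar) (i : Fin N) (η : S → ℝ) (v : S → ℝ) (t : ℕ) :
    ∑ τ : Fin (t+1) → S × A i, lam G π πstar i η τ * Qt G πstar i v τ
      = (∑ j ∈ Finset.range t, G.γ ^ j *
          ∑ x : S × A i, mu G π πstar i η j x *
            Eminus πstar i x.1 x.2 (fun a => G.r i x.1 a))
        + G.γ ^ t * ∑ x : S × A i, mu G π πstar i η t x * qhat G πstar i v x.1 x.2 := by
  induction t with
  | zero =>
    have h : ∀ τ : Fin 1 → S × A i, lam G π πstar i η τ * Qt G πstar i v τ
        = lam G π πstar i η τ * qhat G πstar i v (τ (Fin.last 0)).1 (τ (Fin.last 0)).2 := by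
      intro τ
      unfold Qt
      simp
    rw [Finset.sum_congr rfl fun τ _ => h τ,
      lam_last G π πstar hπ hstar i η 0 (fun x => qhat G πstar i v x.1 x.2)]
    simp
  | succ t ih =>
    rw [sum_snoc]
    have h : ∀ (τ : Fin (t+1) → S × A i),
        ∑ x : S × A i, lam G π πstar i η (Fin.snoc τ x) * Qt G πstar i v (Fin.snoc τ x)
          = lam G π πstar i η τ * Qt G πstar i v τ
            + G.γ ^ t * (lam G π πstar i η τ *
                (Eminus πstar i (τ (Fin.last t)).1 (τ (Fin.last t)).2
                    (fun a => G.r i (τ (Fin.last t)).1 a)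
                  - qhat G πstar i v (τ (Fin.last t)).1 (τ (Fin.last t)).2))
            + G.γ ^ (t+1) * (lam G π πstar i η τ *
                ∑ x : S × A i, (π i x.1 x.2 *
                    stepProb G πstar i (τ (Fin.last t)).1 (τ (Fin.last t)).2 x.1) *
                  qhat G πstar i v x.1 x.2) := by
      intro τ
      have e : ∀ x : S × A i,
          lam G π πstar i η (Fin.snoc τ x) * Qt G πstar i v (Fin.snoc τ x)
            = (lam G π πstar i η τ * (Qt G πstar i v τ
                + G.γ ^ t * (Eminus πstar i (τ (Fin.last t)).1 (τ (Fin.last t)).2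
                      (fun a => G.r i (τ (Fin.last t)).1 a)
                    - qhat G πstar i v (τ (Fin.last t)).1 (τ (Fin.last t)).2)))
                * (π i x.1 x.2 *
                    stepProb G πstar i (τ (Fin.last t)).1 (τ (Fin.last t)).2 x.1)
              + G.γ ^ (t+1) * (lam G π πstar i η τ *
                  ((π i x.1 x.2 *
                      stepProb G πstar i (τ (Fin.last t)).1 (τ (Fin.last t)).2 x.1) *
                    qhat G πstar i v x.1 x.2)) := by
        intro x
        rw [lam_snoc, Qt_snoc]
        ring
      rw [Finset.sum_congr rfl fun x _ => e x, Finset.sum_add_distrib, ← Finset.mul_sum,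
        sum_w_one G π πstar hπ hstar i (τ (Fin.last t)), mul_one, ← Finset.mul_sum,
        ← Finset.mul_sum]
      ring
    rw [Finset.sum_congr rfl fun τ _ => h τ, Finset.sum_add_distrib, Finset.sum_add_distrib,
      ih, ← Finset.mul_sum, ← Finset.mul_sum,
      lam_last G π πstar hπ hstar i η t (fun y => Eminus πstar i y.1 y.2
        (fun a => G.r i y.1 a) - qhat G πstar i v y.1 y.2),
      lam_last G π πstar hπ hstar i η t (fun y => ∑ x : S × A i,
        (π i x.1 x.2 * stepProb G πstar i y.1 y.2 x.1) * qhat G πstar i v x.1 x.2),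
      ← mu_succ_sum, Finset.sum_range_succ]
    have split : ∑ x : S × A i, mu G π πstar i η t x *
          (Eminus πstar i x.1 x.2 (fun a => G.r i x.1 a) - qhat G πstar i v x.1 x.2)
        = (∑ x : S × A i, mu G π πstar i η t x * Eminus πstar i x.1 x.2 (fun a => G.r i x.1 a))
          - ∑ x : S × A i, mu G π πstar i η t x * qhat G πstar i v x.1 x.2 := by
      rw [← Finset.sum_sub_distrib]
      exact Finset.sum_congr rfl fun x _ => mul_sub _ _ _
    rw [split]
    ring

lemma bell_step (G : MarkovGame N S A) (q : JPol N S A) (i : Fin N) (v : S → ℝ)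
    (hv : bell G q i v = v) (d : S → ℝ) :
    ∑ s, d s * v s
      = (∑ s, d s * ∑ a, jp q s a * G.r i s a)
        + G.γ * ∑ s', stepDist G q d s' * v s' := by
  have h0 : ∀ s, d s * v s = d s * bell G q i v s := fun s => by rw [hv]
  have inner : ∀ s a, d s * (jp q s a * (G.r i s a + G.γ * ∑ s', G.P s a s' * v s'))
      = d s * (jp q s a * G.r i s a)
        + ∑ s', G.γ * (d s * (jp q s a * (G.P s a s' * v s'))) := by
    intro s a
    have e : ∑ s', G.γ * (d s * (jp q s a * (G.P s a s' * v s')))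
        = (G.γ * (d s * jp q s a)) * ∑ s', G.P s a s' * v s' := by
      rw [Finset.mul_sum]
      exact Finset.sum_congr rfl fun s' _ => by ring
    rw [e]; ring
  calc ∑ s, d s * v s
      = ∑ s, (∑ a, d s * (jp q s a * G.r i s a)
          + ∑ a, ∑ s', G.γ * (d s * (jp q s a * (G.P s a s' * v s')))) := by
        refine Finset.sum_congr rfl fun s _ => ?_
        rw [h0 s]
        unfold bell
        rw [Finset.mul_sum, ← Finset.sum_add_distrib]
        exact Finset.sum_congr rfl fun a _ => inner s a
    _ = (∑ s, ∑ a, d s * (jp q s a * G.r i s a))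
        + ∑ s, ∑ a, ∑ s', G.γ * (d s * (jp q s a * (G.P s a s' * v s'))) :=
        Finset.sum_add_distrib
    _ = (∑ s, d s * ∑ a, jp q s a * G.r i s a)
        + G.γ * ∑ s', stepDist G q d s' * v s' := by
        congr 1
        · exact Finset.sum_congr rfl fun s _ => (Finset.mul_sum _ _ _).symm
        · refine Eq.symm ?_
          have rhs2 : ∀ s' : S, G.γ * (stepDist G q d s' * v s')
              = ∑ s, ∑ a, G.γ * (d s * (jp q s a * (G.P s a s' * v s'))) := by
            intro s'
            unfold stepDist
            rw [Finset.sum_mul, Finset.mul_sum]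
            refine Finset.sum_congr rfl fun s _ => ?_
            rw [Finset.mul_sum, Finset.sum_mul, Finset.mul_sum]
            exact Finset.sum_congr rfl fun a _ => by ring
          rw [Finset.mul_sum, Finset.sum_congr rfl fun s' _ => rhs2 s', Finset.sum_comm]
          exact Finset.sum_congr rfl fun s _ => Finset.sum_comm

lemma partial_val (G : MarkovGame N S A) (q : JPol N S A) (i : Fin N) (v : S → ℝ)
    (hv : bell G q i v = v) (η : S → ℝ) (t : ℕ) :
    ∑ j ∈ Finset.range t, G.γ ^ j *
        ∑ s, ((stepDist G q)^[j] η) s * ∑ a, jp q s a * G.r i s a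
      = (∑ s, η s * v s) - G.γ ^ t * ∑ s, ((stepDist G q)^[t] η) s * v s := by
  induction t with
  | zero => simp
  | succ t ih =>
    rw [Finset.sum_range_succ, ih]
    have key := bell_step G q i v hv ((stepDist G q)^[t] η)
    rw [Function.iterate_succ_apply']
    linear_combination (-(G.γ ^ t : ℝ)) * key

lemma summable_expRet (G : MarkovGame N S A) (q : JPol N S A) (hq : IsJPol q)
    (η : S → ℝ) (hη : IsDist η) (ρ : S → ((i : Fin N) → A i) → ℝ) :
    Summable (fun t : ℕ => G.γ ^ t * ∑ s, ((stepDist G q)^[t] η) s * ∑ a, jp q s a * ρ s a) := by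
  set B : ℝ := ∑ s, |∑ a, jp q s a * ρ s a| with hB
  have hbound : ∀ t : ℕ,
      |G.γ ^ t * ∑ s, ((stepDist G q)^[t] η) s * ∑ a, jp q s a * ρ s a| ≤ B * G.γ ^ t := by
    intro t
    rw [abs_mul, abs_pow, abs_of_nonneg G.γ_nonneg, mul_comm]
    refine mul_le_mul_of_nonneg_right ?_ (pow_nonneg G.γ_nonneg t)
    exact dist_weight_abs_le _ _ (iter_isDist G q hq η hη t)
  have hgeo : Summable (fun t : ℕ => B * G.γ ^ t) :=
    (summable_geometric_of_lt_one G.γ_nonneg G.γ_lt_one).mul_left B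
  exact Summable.of_abs (hgeo.of_nonneg_of_le (fun t => abs_nonneg _) hbound)

lemma expRet_tendsto (G : MarkovGame N S A) (q : JPol N S A) (hq : IsJPol q)
    (η : S → ℝ) (hη : IsDist η) (ρ : S → ((i : Fin N) → A i) → ℝ) :
    Filter.Tendsto (fun t : ℕ => ∑ j ∈ Finset.range t, G.γ ^ j *
        ∑ s, ((stepDist G q)^[j] η) s * ∑ a, jp q s a * ρ s a)
      Filter.atTop (nhds (expRet G q ρ η)) :=
  (summable_expRet G q hq η hη ρ).hasSum.tendsto_sum_nat

lemma gamma_pow_bounded_tendsto (G : MarkovGame N S A) (K : ℝ) (B : ℕ → ℝ)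
    (hB : ∀ t, |B t| ≤ K) :
    Filter.Tendsto (fun t : ℕ => G.γ ^ t * B t) Filter.atTop (nhds 0) := by
  refine squeeze_zero_norm (a := fun t : ℕ => K * G.γ ^ t) (fun t => ?_) ?_
  · rw [Real.norm_eq_abs, abs_mul, abs_pow, abs_of_nonneg G.γ_nonneg, mul_comm]
    exact mul_le_mul_of_nonneg_right (hB t) (pow_nonneg G.γ_nonneg t)
  · have h := tendsto_pow_atTop_nhds_zero_of_lt_one G.γ_nonneg G.γ_lt_one
    simpa using h.const_mul K

lemma expRet_eq_val (G : MarkovGame N S A) (q : JPol N S A) (hq : IsJPol q)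
    (η : S → ℝ) (hη : IsDist η) (i : Fin N) (v : S → ℝ) (hv : bell G q i v = v) :
    expRet G q (G.r i) η = ∑ s, η s * v s := by
  have h1 := expRet_tendsto G q hq η hη (G.r i)
  have hK : ∀ t : ℕ, |∑ s, ((stepDist G q)^[t] η) s * v s| ≤ ∑ s, |v s| := fun t =>
    dist_weight_abs_le _ _ (iter_isDist G q hq η hη t)
  have h2 : Filter.Tendsto (fun t : ℕ => (∑ s, η s * v s)
      - G.γ ^ t * ∑ s, ((stepDist G q)^[t] η) s * v s) Filter.atTop
      (nhds ((∑ s, η s * v s) - 0)) :=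
    tendsto_const_nhds.sub (gamma_pow_bounded_tendsto G (∑ s, |v s|) _ hK)
  have h3 := h2.congr (fun t => (partial_val G q i v hv η t).symm)
  have := tendsto_nhds_unique h1 h3
  rw [this, sub_zero]

lemma mu_isDist (G : MarkovGame N S A) (π πstar : JPol N S A) (hπ : IsJPol π)
    (hstar : IsJPol πstar) (i : Fin N) (η : S → ℝ) (hη : IsDist η) (t : ℕ) :
    IsDist (mu G π πstar i η t) := by
  have hupd := isJPol_update π πstar hπ hstar i
  have hd := iter_isDist G _ hupd η hη t
  constructor
  · intro x
    rw [mu_eq]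
    exact mul_nonneg (hd.1 _) ((hπ i _).1 _)
  · rw [Finset.sum_congr rfl fun x _ => mu_eq G π πstar i η t x, Fintype.sum_prod_type]
    dsimp only
    rw [← hd.2]
    refine Finset.sum_congr rfl fun s _ => ?_
    rw [← Finset.mul_sum, (hπ i s).2, mul_one]

lemma mu_reward (G : MarkovGame N S A) (π πstar : JPol N S A) (i : Fin N) (η : S → ℝ)
    (t : ℕ) :
    ∑ x : S × A i, mu G π πstar i η t x * Eminus πstar i x.1 x.2 (fun a => G.r i x.1 a)
      = ∑ s, ((stepDist G (Function.update πstar i (π i)))^[t] η) s *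
          ∑ a, jp (Function.update πstar i (π i)) s a * G.r i s a := by
  rw [Fintype.sum_prod_type]
  refine Finset.sum_congr rfl fun s _ => ?_
  rw [sum_factorize πstar i (π i) s (fun a => G.r i s a), Finset.mul_sum]
  refine Finset.sum_congr rfl fun ai _ => ?_
  rw [mu_eq]
  dsimp only
  ring

lemma mu_zero_v (G : MarkovGame N S A) (π πstar : JPol N S A) (hπ : IsJPol π)
    (i : Fin N) (η : S → ℝ) (f : S → ℝ) :
    ∑ x : S × A i, mu G π πstar i η 0 x * f x.1 = ∑ s, η s * f s := by
  rw [Fintype.sum_prod_type]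
  refine Finset.sum_congr rfl fun s _ => ?_
  have h : ∀ a : A i, mu G π πstar i η 0 (s, a) * f s = (η s * f s) * π i s a := by
    intro a
    show (η s * π i s a) * f s = _
    ring
  rw [Finset.sum_congr rfl fun a _ => h a, ← Finset.mul_sum, (hπ i s).2, mul_one]

end helpers

/-- `lim_{t→∞} Σ_i Σ_{τ_i} λ*_π(τ_i) (Q_i^{(t)}(τ_i; π*, r) − v̂_i(s^{(0)}; π*, r))
= Σ_i E_{π_i, π*_{-i}}[Σ_t γ^t r_i] − Σ_i E_{π*}[Σ_t γ^t r_i]`. -/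
theorem stmt7 (G : MarkovGame N S A) (π πstar : JPol N S A)
    (hπ : IsJPol π) (hstar : IsJPol πstar) (η : S → ℝ) (hη : IsDist η)
    (v : Fin N → S → ℝ) (hv : ∀ i, bell G πstar i (v i) = v i) :
    Filter.Tendsto
      (fun t : ℕ => ∑ i : Fin N, ∑ τ : Fin (t + 1) → S × A i,
        lam G π πstar i η τ * (Qt G πstar i (v i) τ - v i (τ 0).1))
      Filter.atTop
      (nhds ((∑ i : Fin N, expRet G (Function.update πstar i (π i)) (G.r i) η) -
        ∑ i : Fin N, expRet G πstar (G.r i) η)) := by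
  have hupd : ∀ j : Fin N, IsJPol (Function.update πstar j (π j)) :=
    fun j => isJPol_update π πstar hπ hstar j
  have hfun : ∀ (t : ℕ) (i : Fin N),
      ∑ τ : Fin (t + 1) → S × A i, lam G π πstar i η τ * (Qt G πstar i (v i) τ - v i (τ 0).1)
        = ((∑ j ∈ Finset.range t, G.γ ^ j *
            ∑ s, ((stepDist G (Function.update πstar i (π i)))^[j] η) s *
              ∑ a, jp (Function.update πstar i (π i)) s a * G.r i s a)
          + G.γ ^ t * ∑ x : S × A i, mu G π πstar i η t x * qhat G πstar i (v i) x.1 x.2)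
          - ∑ s, η s * v i s := by
    intro t i
    have e : ∀ τ : Fin (t+1) → S × A i,
        lam G π πstar i η τ * (Qt G πstar i (v i) τ - v i (τ 0).1)
          = lam G π πstar i η τ * Qt G πstar i (v i) τ
            - lam G π πstar i η τ * v i (τ 0).1 := fun τ => mul_sub _ _ _
    rw [Finset.sum_congr rfl fun τ _ => e τ, Finset.sum_sub_distrib,
      sum_lam_Qt G π πstar hπ hstar i η (v i) t,
      lam_first G π πstar hπ hstar i η t (fun x => v i x.1),
      mu_zero_v G π πstar hπ i η (v i)]
    congr 1
    congr 1
    exact Finset.sum_congr rfl fun j _ => by rw [mu_reward]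
  have key : ∀ i : Fin N,
      Filter.Tendsto (fun t : ℕ => ∑ τ : Fin (t + 1) → S × A i,
          lam G π πstar i η τ * (Qt G πstar i (v i) τ - v i (τ 0).1)) Filter.atTop
        (nhds (expRet G (Function.update πstar i (π i)) (G.r i) η -
          expRet G πstar (G.r i) η)) := by
    intro i
    have t1 := expRet_tendsto G _ (hupd i) η hη (G.r i)
    have hK : ∀ t : ℕ, |∑ x : S × A i, mu G π πstar i η t x * qhat G πstar i (v i) x.1 x.2|
        ≤ ∑ x : S × A i, |qhat G πstar i (v i) x.1 x.2| := fun t =>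
      dist_weight_abs_le _ _ (mu_isDist G π πstar hπ hstar i η hη t)
    have t2 := gamma_pow_bounded_tendsto G _ _ hK
    have t3 : expRet G πstar (G.r i) η = ∑ s, η s * v i s :=
      expRet_eq_val G πstar hstar η hη i (v i) (hv i)
    have t4 := (t1.add t2).sub (tendsto_const_nhds (x := ∑ s, η s * v i s))
    rw [add_zero] at t4
    rw [t3]
    exact t4.congr fun t => (hfun t i).symm
  have main := tendsto_finset_sum (Finset.univ : Finset (Fin N)) (fun i _ => key i)
  rw [← Finset.sum_sub_distrib]
  exact main
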